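/- If f : (ℝ^m,0) → (ℝ^n,0) is an r-Morin singularity (A-equivalent to h_{0,r}), then there exist signs ε_1, ε_2 ∈ {±1} and orientation-preserving diffeomorphism-germs σ : (ℝ^m,0) → (ℝ^m,0) and τ : (ℝ^n,0) → (ℝ^n,0) such that τ∘f∘σ = h_{r,(ε_1,ε_2)} as germs at 0. -/

import Mathlib

open Filter Topology Matrix

noncomputable section

/-- The `q`-th component of `f` (`0`-indexed), or `0` if `q` is out of range. -/
def comp {m n : ℕ} (f : (Fin m → ℝ) → (Fin n → ℝ)) (q : ℕ) : (Fin m → ℝ) → ℝ :=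
  fun x => if h : q < n then f x ⟨q, h⟩ else 0

/-- The `q`-th coordinate of `x` (`0`-indexed), or `0` if `q` is out of range. -/
def xhat {m : ℕ} (x : Fin m → ℝ) (q : ℕ) : ℝ := if h : q < m then x ⟨q, h⟩ else 0

/-- The partial derivative of `g` at `p` in the `q`-th coordinate direction. -/
def pd {m : ℕ} (g : (Fin m → ℝ) → ℝ) (p : Fin m → ℝ) (q : ℕ) : ℝ :=
  fderiv ℝ g p (fun l : Fin m => if l.val = q then 1 else 0)

/-- The Jacobian matrix of `f` at `p`; its rank is the rank of `df_p`. -/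
def jac {m n : ℕ} (f : (Fin m → ℝ) → (Fin n → ℝ)) (p : Fin m → ℝ) : Matrix (Fin n) (Fin m) ℝ :=
  Matrix.of fun i l => pd (comp f i.val) p l.val

/-- `lam f i` is the paper's `λ_{i+1}` (here `i` is `0`-indexed, `0 ≤ i ≤ n-m`):
the determinant of the `m×m` matrix whose rows are the gradients of
`f_0, …, f_{m-2}, f_{m-1+i}` (`0`-indexed components). -/
def lam {m n : ℕ} (f : (Fin m → ℝ) → (Fin n → ℝ)) (i : ℕ) (p : Fin m → ℝ) : ℝ :=
  Matrix.det (Matrix.of fun (k l : Fin m) =>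
    pd (comp f (if k.val < m - 1 then k.val else m - 1 + i)) p l.val)

/-- `Λ = (λ_1, …, λ_{n-m+1}) : ℝ^m → ℝ^{n-m+1}`. -/
def Lam {m n : ℕ} (f : (Fin m → ℝ) → (Fin n → ℝ)) (p : Fin m → ℝ) : Fin (n - m + 1) → ℝ :=
  fun i => lam f i.val p

/-- The Jacobian matrix of `Λ` at `p`. -/
def dLam {m n : ℕ} (f : (Fin m → ℝ) → (Fin n → ℝ)) (p : Fin m → ℝ) :
    Matrix (Fin (n - m + 1)) (Fin m) ℝ :=
  Matrix.of fun i l => pd (fun x => Lam f x i) p l.val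

/-- `etaIter f η j = η^jΛ`, the `j`-fold iterated directional derivative of `Λ` along `η`. -/
def etaIter {m n : ℕ} (f : (Fin m → ℝ) → (Fin n → ℝ)) (η : (Fin m → ℝ) → (Fin m → ℝ)) :
    ℕ → (Fin m → ℝ) → (Fin (n - m + 1) → ℝ)
  | 0 => Lam f
  | j + 1 => fun p => fderiv ℝ (etaIter f η j) p (η p)

/-- The Jacobian matrix of `(Λ, ηΛ, …, η^jΛ) : ℝ^m → ℝ^{(j+1)(n-m+1)}` at `p`. -/
def stackJac {m n : ℕ} (f : (Fin m → ℝ) → (Fin n → ℝ)) (η : (Fin m → ℝ) → (Fin m → ℝ))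
    (j : ℕ) (p : Fin m → ℝ) : Matrix (Fin (j + 1) × Fin (n - m + 1)) (Fin m) ℝ :=
  Matrix.of fun si l => pd (fun x => etaIter f η si.1.val x si.2) p l.val

/-- A diffeomorphism-germ `(ℝ^k,0) → (ℝ^k,0)`: it fixes `0`, is smooth at `0` and its
differential at `0` is invertible (so by the inverse function theorem it is a germ of a
diffeomorphism). -/
def IsDiffeoGerm {k : ℕ} (σ : (Fin k → ℝ) → (Fin k → ℝ)) : Prop :=
  σ 0 = 0 ∧ ContDiffAt ℝ (⊤ : ℕ∞) σ 0 ∧ LinearMap.det ((fderiv ℝ σ 0).toLinearMap) ≠ 0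

/-- An orientation-preserving diffeomorphism-germ `(ℝ^k,0) → (ℝ^k,0)`. -/
def IsOPDiffeoGerm {k : ℕ} (σ : (Fin k → ℝ) → (Fin k → ℝ)) : Prop :=
  σ 0 = 0 ∧ ContDiffAt ℝ (⊤ : ℕ∞) σ 0 ∧ 0 < LinearMap.det ((fderiv ℝ σ 0).toLinearMap)

/-- `A`-equivalence of map-germs at `0`. -/
def AEquiv {m n : ℕ} (f g : (Fin m → ℝ) → (Fin n → ℝ)) : Prop :=
  ∃ (φ : (Fin m → ℝ) → (Fin m → ℝ)) (Φ : (Fin n → ℝ) → (Fin n → ℝ)),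
    IsDiffeoGerm φ ∧ IsDiffeoGerm Φ ∧ ∀ᶠ x in 𝓝 0, Φ (f (φ x)) = g x

/-- The Morin normal form `h_{0,r} : (ℝ^m,0) → (ℝ^n,0)` (all indices `0`-indexed):
`h_{0,r}(x) = (x_1, …, x_{m-1}, h_1(x), …, h_{n-m+1}(x))` with
`h_i(x) = Σ_{j=1}^r x_{(i-1)r+j} x_m^j` for `i = 1, …, n-m` and
`h_{n-m+1}(x) = Σ_{j=1}^{r-1} x_{(n-m)r+j} x_m^j + x_m^{r+1}`. -/
def hMorinNF (m n r : ℕ) : (Fin m → ℝ) → (Fin n → ℝ) := fun x k =>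
  if k.val < m - 1 then xhat x k.val
  else if k.val - (m - 1) < n - m then
    ∑ j ∈ Finset.range r, xhat x ((k.val - (m - 1)) * r + j) * (xhat x (m - 1)) ^ (j + 1)
  else
    (∑ j ∈ Finset.range (r - 1), xhat x ((n - m) * r + j) * (xhat x (m - 1)) ^ (j + 1))
      + (xhat x (m - 1)) ^ (r + 1)

/-- The normal form `h_{r,(ε₁,ε₂)}(x) = (ε₁x_1, x_2, …, x_{m-1},
ε₁x_1x_m + Σ_{j=2}^r x_jx_m^j, h_2(x), …, h_{n-m}(x), ε₂h_{n-m+1}(x))`. -/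
def hSign (m n r : ℕ) (e1 e2 : ℝ) : (Fin m → ℝ) → (Fin n → ℝ) := fun x k =>
  if k.val = 0 then e1 * xhat x 0
  else if k.val < m - 1 then xhat x k.val
  else if k.val = m - 1 then
    e1 * xhat x 0 * xhat x (m - 1)
      + ∑ j ∈ Finset.Ico 1 r, xhat x j * (xhat x (m - 1)) ^ (j + 1)
  else if k.val - (m - 1) < n - m then
    ∑ j ∈ Finset.range r, xhat x ((k.val - (m - 1)) * r + j) * (xhat x (m - 1)) ^ (j + 1)
  else
    e2 * ((∑ j ∈ Finset.range (r - 1), xhat x ((n - m) * r + j) * (xhat x (m - 1)) ^ (j + 1))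
      + (xhat x (m - 1)) ^ (r + 1))


/-- Scale the `q`-th coordinate by `c`. -/
def scaleCoord (k q : ℕ) (c : ℝ) : (Fin k → ℝ) →L[ℝ] (Fin k → ℝ) :=
  ContinuousLinearMap.pi fun i => (if i.val = q then c else 1) • ContinuousLinearMap.proj i

lemma scaleCoord_apply (k q : ℕ) (c : ℝ) (x : Fin k → ℝ) (i : Fin k) :
    scaleCoord k q c x i = (if i.val = q then c else 1) * x i := by
  simp only [scaleCoord, ContinuousLinearMap.pi_apply]
  split <;> simp

lemma scaleCoord_det {k q : ℕ} (h : q < k) (c : ℝ) :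
    LinearMap.det (scaleCoord k q c).toLinearMap = c := by
  have h1 : (scaleCoord k q c).toLinearMap
      = Matrix.toLin' (Matrix.diagonal fun i : Fin k => if i.val = q then c else 1) := by
    apply LinearMap.ext; intro x; funext i
    simp only [scaleCoord, ContinuousLinearMap.coe_coe, ContinuousLinearMap.pi_apply,
      Matrix.toLin'_apply, Matrix.mulVec_diagonal]
    split <;> simp
  rw [h1, LinearMap.det_toLin', Matrix.det_diagonal]
  have h2 : (fun i : Fin k => if i.val = q then c else 1)
      = fun i : Fin k => if i = ⟨q, h⟩ then c else 1 := by
    funext i; simp [Fin.ext_iff]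
  rw [h2, Finset.prod_ite_eq']
  simp

lemma xhat_scale {m : ℕ} (e1 : ℝ) (x : Fin m → ℝ) (q : ℕ) :
    xhat (scaleCoord m 0 e1 x) q = (if q = 0 then e1 else 1) * xhat x q := by
  unfold xhat
  by_cases h : q < m
  · rw [dif_pos h, dif_pos h, scaleCoord_apply]
  · rw [dif_neg h, dif_neg h, mul_zero]

lemma key_identity {m n r : ℕ} (hm2 : 2 ≤ m) (hmn : m < n) (hr : 1 ≤ r) (e1 e2 : ℝ)
    (x : Fin m → ℝ) :
    scaleCoord n (n - 1) e2 (hMorinNF m n r (scaleCoord m 0 e1 x))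
      = hSign m n r e1 e2 x := by
  funext k
  rw [scaleCoord_apply]
  have hS : ∀ q, xhat (scaleCoord m 0 e1 x) q = (if q = 0 then e1 else 1) * xhat x q :=
    xhat_scale e1 x
  have hSm : xhat (scaleCoord m 0 e1 x) (m - 1) = xhat x (m - 1) := by
    rw [hS, if_neg (by omega), one_mul]
  show (if k.val = n - 1 then e2 else 1) * hMorinNF m n r (scaleCoord m 0 e1 x) k
      = hSign m n r e1 e2 x k
  unfold hMorinNF hSign
  rcases Nat.lt_or_ge k.val (m - 1) with hk | hk
  · -- first coordinates
    have h1 : ¬ k.val = n - 1 := by omega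
    rcases Nat.eq_zero_or_pos k.val with h0 | h0
    · rw [if_neg h1, one_mul, if_pos hk, hS, if_pos h0, if_pos h0, h0]
    · rw [if_neg h1, one_mul, if_pos hk, hS, if_neg (show ¬ k.val = 0 by omega),
        if_neg (show ¬ k.val = 0 by omega), one_mul, if_pos hk]
  · have hc1 : ¬ k.val < m - 1 := by omega
    have hc0 : ¬ k.val = 0 := by omega
    rcases Nat.eq_or_lt_of_le hk with hk1 | hk1
    · -- k = m - 1
      have hkm : k.val = m - 1 := hk1.symm
      have hkn : ¬ k.val = n - 1 := by omega
      have h0 : k.val - (m - 1) = 0 := by omega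
      rw [if_neg hkn, one_mul, if_neg hc1, if_pos (show k.val - (m - 1) < n - m by omega),
        h0, if_neg hc0, if_neg hc1, if_pos hkm]
      rw [Finset.range_eq_Ico, Finset.sum_eq_sum_Ico_succ_bot hr]
      simp only [zero_mul, zero_add, hSm, hS]
      congr 1
      · norm_num
      · apply Finset.sum_congr rfl
        intro j hj
        simp only [Finset.mem_Ico] at hj
        rw [if_neg (by omega), one_mul]
    · -- k > m - 1
      have hkm : ¬ k.val = m - 1 := by omega
      rcases Nat.lt_or_ge (k.val - (m - 1)) (n - m) with hk2 | hk2
      · have hkn : ¬ k.val = n - 1 := by omega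
        rw [if_neg hkn, one_mul, if_neg hc1, if_pos hk2, if_neg hc0, if_neg hc1,
          if_neg hkm, if_pos hk2]
        apply Finset.sum_congr rfl
        intro j hj
        rw [hS, hSm, if_neg (by
          have := Nat.mul_le_mul (show 1 ≤ k.val - (m - 1) by omega) hr
          omega), one_mul]
      · have hkn : k.val = n - 1 := by omega
        have hc2 : ¬ k.val - (m - 1) < n - m := by omega
        rw [if_pos hkn, if_neg hc1, if_neg hc2, if_neg hc0, if_neg hc1, if_neg hkm,
          if_neg hc2]
        congr 2
        · apply Finset.sum_congr rfl
          intro j hj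
          rw [hS, hSm, if_neg (by
            have := Nat.mul_le_mul (show 1 ≤ n - m by omega) hr
            omega), one_mul]
        · rw [hSm]

/-- Every `r`-Morin singularity `f` can be brought to one of the normal
forms `h_{r,(ε₁,ε₂)}` by orientation-preserving diffeomorphism-germs on source and
target. -/
theorem stmt14 {m n r : ℕ} (hmn : m < n) (hr : 1 ≤ r) (hdim : r * (n - m + 1) ≤ m)
    (f : (Fin m → ℝ) → (Fin n → ℝ))
    (hf : AEquiv f (hMorinNF m n r)) :
    ∃ e1 e2 : ℝ, (e1 = 1 ∨ e1 = -1) ∧ (e2 = 1 ∨ e2 = -1) ∧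
      ∃ (σ : (Fin m → ℝ) → (Fin m → ℝ)) (τ : (Fin n → ℝ) → (Fin n → ℝ)),
        IsOPDiffeoGerm σ ∧ IsOPDiffeoGerm τ ∧
        ∀ᶠ x in 𝓝 (0 : Fin m → ℝ), τ (f (σ x)) = hSign m n r e1 e2 x := by
  obtain ⟨φ, Φ, ⟨hφ0, hφs, hφd⟩, ⟨hΦ0, hΦs, hΦd⟩, heq⟩ := hf
  have hm2 : 2 ≤ m := by
    have := Nat.mul_le_mul hr (show 2 ≤ n - m + 1 by omega)
    omega
  set d1 := LinearMap.det ((fderiv ℝ φ 0).toLinearMap) with hd1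
  set d2 := LinearMap.det ((fderiv ℝ Φ 0).toLinearMap) with hd2
  set e1 : ℝ := if 0 < d1 then 1 else -1 with he1
  set e2 : ℝ := if 0 < d2 then 1 else -1 with he2
  have hm0 : (0:ℕ) < m := by omega
  have hn0 : n - 1 < n := by omega
  refine ⟨e1, e2, by rw [he1]; split <;> simp, by rw [he2]; split <;> simp,
    fun x => φ (scaleCoord m 0 e1 x), fun y => scaleCoord n (n-1) e2 (Φ y), ?_, ?_, ?_⟩
  · refine ⟨by show φ (scaleCoord m 0 e1 0) = 0; rw [map_zero, hφ0], ?_, ?_⟩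
    · exact ContDiffAt.comp 0 (by rwa [map_zero]) (scaleCoord m 0 e1).contDiff.contDiffAt
    · have hdiff : DifferentiableAt ℝ φ ((scaleCoord m 0 e1) 0) := by
        rw [map_zero]; exact hφs.differentiableAt (by simp)
      have : fderiv ℝ (fun x => φ (scaleCoord m 0 e1 x)) 0
          = (fderiv ℝ φ 0).comp (scaleCoord m 0 e1) := by
        rw [show (fun x => φ (scaleCoord m 0 e1 x)) = φ ∘ (scaleCoord m 0 e1) from rfl,
          fderiv_comp 0 hdiff (scaleCoord m 0 e1).differentiableAt,
          (scaleCoord m 0 e1).fderiv, map_zero]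
      rw [this, ContinuousLinearMap.toLinearMap_comp, LinearMap.det_comp, scaleCoord_det hm0, ← hd1]
      rw [he1]
      rcases lt_trichotomy d1 0 with h | h | h
      · rw [if_neg (by linarith)]; linarith
      · exact absurd h hφd
      · rw [if_pos h]; linarith
  · refine ⟨by show scaleCoord n (n-1) e2 (Φ 0) = 0; rw [hΦ0, map_zero], ?_, ?_⟩
    · exact ContDiffAt.comp 0 (scaleCoord n (n-1) e2).contDiff.contDiffAt hΦs
    · have hdiff : DifferentiableAt ℝ Φ 0 := hΦs.differentiableAt (by simp)
      have : fderiv ℝ (fun y => scaleCoord n (n-1) e2 (Φ y)) 0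
          = (scaleCoord n (n-1) e2).comp (fderiv ℝ Φ 0) := by
        rw [show (fun y => scaleCoord n (n-1) e2 (Φ y)) = (scaleCoord n (n-1) e2) ∘ Φ from rfl,
          fderiv_comp 0 (scaleCoord n (n-1) e2).differentiableAt hdiff,
          (scaleCoord n (n-1) e2).fderiv]
      rw [this, ContinuousLinearMap.toLinearMap_comp, LinearMap.det_comp, scaleCoord_det hn0, ← hd2]
      rw [he2]
      rcases lt_trichotomy d2 0 with h | h | h
      · rw [if_neg (by linarith)]; linarith
      · exact absurd h hΦd
      · rw [if_pos h]; linarith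
  · have hS0 : Filter.Tendsto (scaleCoord m 0 e1) (𝓝 0) (𝓝 0) := by
      have := (scaleCoord m 0 e1).continuous.tendsto 0
      rwa [map_zero] at this
    filter_upwards [hS0.eventually heq] with x hx
    rw [hx]
    exact key_identity hm2 hmn hr e1 e2 x
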